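/- For d ≥ 3 and t ∈ (0, 1/√(d-1)), with u=(1,t), v=(1,-t), the limit as t → 0⁺ of ((√(d-1)+t)^d - (√(d-1)-t)^d)²/(d^d(2(1+t²)^d - 2(1-t²)^d)) equals (1-1/d)^{d-1}. -/

import Mathlib

open Filter Real Set

theorem ratio_limit (d : ℕ) (hd : 3 ≤ d) :
    Filter.Tendsto
      (fun t : ℝ =>
        ((Real.sqrt ((d : ℝ) - 1) + t) ^ d - (Real.sqrt ((d : ℝ) - 1) - t) ^ d) ^ 2 /
          ((d : ℝ) ^ d * (2 * (1 + t ^ 2) ^ d - 2 * (1 - t ^ 2) ^ d)))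
      (nhdsWithin 0 (Set.Ioi 0)) (nhds ((1 - 1 / (d : ℝ)) ^ (d - 1))) := by
  have hd3 : (3:ℝ) ≤ (d:ℝ) := by exact_mod_cast hd
  set a : ℝ := Real.sqrt ((d:ℝ) - 1) with ha
  have ha2 : a ^ 2 = (d:ℝ) - 1 := Real.sq_sqrt (by linarith)
  have hdne : (d:ℝ) ≠ 0 := by positivity
  -- numerator slope
  have hfd : HasDerivAt (fun t : ℝ => (a+t)^d - (a-t)^d) (2*d*a^(d-1)) 0 := by
    have h1 : HasDerivAt (fun t : ℝ => (a+t)^d) ((d:ℝ)*(a+0)^(d-1)*1) 0 :=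
      ((hasDerivAt_id 0).const_add a).pow d
    have h2 : HasDerivAt (fun t : ℝ => (a-t)^d) ((d:ℝ)*(a-0)^(d-1)*(-1)) 0 :=
      ((hasDerivAt_id 0).const_sub a).pow d
    have := h1.sub h2
    convert this using 1
    rfl
    rfl
    rfl
    all_goals ring
  have hN : Tendsto (fun t : ℝ => ((a+t)^d - (a-t)^d)/t) (nhdsWithin 0 (Set.Ioi 0))
      (nhds (2*d*a^(d-1))) := by
    have := hasDerivAt_iff_tendsto_slope.mp hfd
    have h2 := this.mono_left (nhdsWithin_mono 0 (fun x hx => ne_of_gt hx : Set.Ioi (0:ℝ) ⊆ {(0:ℝ)}ᶜ))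
    refine h2.congr (fun t => ?_)
    simp [slope_def_field, div_eq_div_iff]
    all_goals ring
  -- denominator slope for G
  have hGd : HasDerivAt (fun s : ℝ => 2*(1+s)^d - 2*(1-s)^d) (4*d) 0 := by
    have h1 : HasDerivAt (fun s : ℝ => (1+s)^d) ((d:ℝ)*(1+0:ℝ)^(d-1)*1) 0 :=
      ((hasDerivAt_id 0).const_add 1).pow d
    have h2 : HasDerivAt (fun s : ℝ => (1-s)^d) ((d:ℝ)*(1-0:ℝ)^(d-1)*(-1)) 0 :=
      ((hasDerivAt_id 0).const_sub 1).pow d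
    have := (h1.const_mul 2).sub (h2.const_mul 2)
    convert this using 1
    rfl
    rfl
    rfl
    all_goals ring
  have hG : Tendsto (fun s : ℝ => (2*(1+s)^d - 2*(1-s)^d)/s) (nhdsWithin 0 {(0:ℝ)}ᶜ)
      (nhds (4*d)) := by
    have := hasDerivAt_iff_tendsto_slope.mp hGd
    refine this.congr (fun s => ?_)
    simp [slope_def_field, div_eq_div_iff]
    all_goals ring
  have hsq : Tendsto (fun t : ℝ => t^2) (nhdsWithin 0 (Set.Ioi 0)) (nhdsWithin 0 {(0:ℝ)}ᶜ) := by
    apply tendsto_nhdsWithin_of_tendsto_nhds_of_eventually_within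
    · have : Tendsto (fun t : ℝ => t^2) (nhds 0) (nhds 0) := by
        simpa using (continuous_pow 2).tendsto (0:ℝ)
      exact this.mono_left nhdsWithin_le_nhds
    · filter_upwards [self_mem_nhdsWithin] with t ht
      exact ne_of_gt (pow_pos ht 2)
  have hD : Tendsto (fun t : ℝ => (2*(1+t^2)^d - 2*(1-t^2)^d)/t^2)
      (nhdsWithin 0 (Set.Ioi 0)) (nhds (4*(d:ℝ))) := by
    exact hG.comp hsq
  have hden_ne : (d:ℝ)^d * (4*d) ≠ 0 := by positivity
  have hmain : Tendsto (fun t : ℝ =>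
      (((a+t)^d - (a-t)^d)/t)^2 / ((d:ℝ)^d * ((2*(1+t^2)^d - 2*(1-t^2)^d)/t^2)))
      (nhdsWithin 0 (Set.Ioi 0))
      (nhds ((2*d*a^(d-1))^2 / ((d:ℝ)^d * (4*d)))) :=
    ((hN.pow 2).div (hD.const_mul _) hden_ne)
  have hval : (2*(d:ℝ)*a^(d-1))^2 / ((d:ℝ)^d * (4*(d:ℝ))) = (1 - 1/(d:ℝ))^(d-1) := by
    have h1 : (2*(d:ℝ)*a^(d-1))^2 = 4*(d:ℝ)^2 * ((d:ℝ)-1)^(d-1) := by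
      rw [mul_pow, mul_pow, ← pow_mul, mul_comm (d-1) 2, pow_mul, ha2]
      ring
    have h2 : (1 - 1/(d:ℝ))^(d-1) = ((d:ℝ)-1)^(d-1) / (d:ℝ)^(d-1) := by
      rw [← div_pow]
      congr 1
      field_simp
    rw [h1, h2]
    have hdd : (d:ℝ)^d = (d:ℝ)^(d-1) * (d:ℝ) := by
      rw [← pow_succ]
      congr 1
      omega
    rw [hdd]
    have hpne : (d:ℝ)^(d-1) ≠ 0 := by positivity
    field_simp
  rw [← hval]
  refine hmain.congr' ?_
  filter_upwards [self_mem_nhdsWithin] with t ht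
  have ht2 : t^2 ≠ 0 := ne_of_gt (pow_pos ht 2)
  rw [div_pow, ← mul_div_assoc, div_div_div_cancel_right₀ ht2]
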